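/- Let I = [r..i] and I' = [r'..i'] be integer intervals with |I| ≥ 2, |I'| ≥ 2, |I| ≠ |I'|, and i ≠ i'. Set Ĩ = I \ {i} and Ĩ' = I' \ {i'}. Then φ := (β(I,I') − α(I,I')) − (β(I,Ĩ') − α(I,Ĩ')) − (β(Ĩ,I') − α(Ĩ,I')) + (β(Ĩ,Ĩ') − α(Ĩ,Ĩ')) = 0. -/

import Mathlib

/-- `α(P,P') = min(|{p' ∈ P' : p' < min P}|, |{p ∈ P : p > max P'}|)` for
`P = [r..i]`, `P' = [r'..i']`. -/
noncomputable def alphaPP (r i r' i' : ℤ) : ℕ :=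
  min ((Finset.Icc r' i').filter (fun p => p < r)).card
      ((Finset.Icc r i).filter (fun p => i' < p)).card

/-- `β(P,P') = min(|{p' ∈ P' : p' > max P}|, |{p ∈ P : p < min P'}|)`. -/
noncomputable def betaPP (r i r' i' : ℤ) : ℕ :=
  min ((Finset.Icc r' i').filter (fun p => i < p)).card
      ((Finset.Icc r i).filter (fun p => p < r')).card

/-- The quantity `φ` for `I = [r..i]`, `I' = [r'..i']`, `Ĩ = I \ {i} = [r..i-1]`,
`Ĩ' = I' \ {i'} = [r'..i'-1]`. -/
noncomputable def phiII (r i r' i' : ℤ) : ℤ :=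
  ((betaPP r i r' i' : ℤ) - alphaPP r i r' i')
    - ((betaPP r i r' (i' - 1) : ℤ) - alphaPP r i r' (i' - 1))
    - ((betaPP r (i - 1) r' i' : ℤ) - alphaPP r (i - 1) r' i')
    + ((betaPP r (i - 1) r' (i' - 1) : ℤ) - alphaPP r (i - 1) r' (i' - 1))


lemma card_filter_lt (a b c : ℤ) :
    ((Finset.Icc a b).filter (fun p => p < c)).card = (min b (c-1) + 1 - a).toNat := by
  have h : (Finset.Icc a b).filter (fun p => p < c) = Finset.Icc a (min b (c-1)) := by
    ext x; simp [Finset.mem_Icc]; omega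
  rw [h, Int.card_Icc]

lemma card_filter_gt (a b c : ℤ) :
    ((Finset.Icc a b).filter (fun p => c < p)).card = (b + 1 - max a (c+1)).toNat := by
  have h : (Finset.Icc a b).filter (fun p => c < p) = Finset.Icc (max a (c+1)) b := by
    ext x; simp [Finset.mem_Icc]; omega
  rw [h, Int.card_Icc]

set_option maxHeartbeats 2000000 in
/-- if `|I|, |I'| ≥ 2`, `|I| ≠ |I'|` and `i ≠ i'`, then `φ = 0`. -/
theorem stmt3 (r i r' i' : ℤ) (hI : r ≤ i - 1) (hI' : r' ≤ i' - 1)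
    (hcard : (Finset.Icc r i).card ≠ (Finset.Icc r' i').card)
    (hii : i ≠ i') :
    phiII r i r' i' = 0 := by
  simp only [phiII, alphaPP, betaPP, card_filter_lt, card_filter_gt, Int.card_Icc] at hcard ⊢
  rcases lt_trichotomy i' r with h1 | h1 | h1 <;>
    rcases lt_trichotomy i r' with h2 | h2 | h2
  · rw [show min i' (r-1) = i' from by omega, show min (i'-1) (r-1) = i'-1 from by omega, show max r (i'+1) = r from by omega, show max r (i'-1+1) = r from by omega, show min i (r'-1) = i from by omega, show min (i-1) (r'-1) = i-1 from by omega, show max r' (i+1) = r' from by omega, show max r' (i-1+1) = r' from by omega]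
    omega
  · rw [show min i' (r-1) = i' from by omega, show min (i'-1) (r-1) = i'-1 from by omega, show max r (i'+1) = r from by omega, show max r (i'-1+1) = r from by omega, show min i (r'-1) = r'-1 from by omega, show min (i-1) (r'-1) = r'-1 from by omega, show max r' (i+1) = i+1 from by omega, show max r' (i-1+1) = r' from by omega]
    omega
  · rw [show min i' (r-1) = i' from by omega, show min (i'-1) (r-1) = i'-1 from by omega, show max r (i'+1) = r from by omega, show max r (i'-1+1) = r from by omega, show min i (r'-1) = r'-1 from by omega, show min (i-1) (r'-1) = r'-1 from by omega, show max r' (i+1) = i+1 from by omega, show max r' (i-1+1) = i from by omega]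
    omega
  · rw [show min i' (r-1) = r-1 from by omega, show min (i'-1) (r-1) = r-1 from by omega, show max r (i'+1) = i'+1 from by omega, show max r (i'-1+1) = r from by omega, show min i (r'-1) = i from by omega, show min (i-1) (r'-1) = i-1 from by omega, show max r' (i+1) = r' from by omega, show max r' (i-1+1) = r' from by omega]
    omega
  · rw [show min i' (r-1) = r-1 from by omega, show min (i'-1) (r-1) = r-1 from by omega, show max r (i'+1) = i'+1 from by omega, show max r (i'-1+1) = r from by omega, show min i (r'-1) = r'-1 from by omega, show min (i-1) (r'-1) = r'-1 from by omega, show max r' (i+1) = i+1 from by omega, show max r' (i-1+1) = r' from by omega]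
    omega
  · rw [show min i' (r-1) = r-1 from by omega, show min (i'-1) (r-1) = r-1 from by omega, show max r (i'+1) = i'+1 from by omega, show max r (i'-1+1) = r from by omega, show min i (r'-1) = r'-1 from by omega, show min (i-1) (r'-1) = r'-1 from by omega, show max r' (i+1) = i+1 from by omega, show max r' (i-1+1) = i from by omega]
    omega
  · rw [show min i' (r-1) = r-1 from by omega, show min (i'-1) (r-1) = r-1 from by omega, show max r (i'+1) = i'+1 from by omega, show max r (i'-1+1) = i' from by omega, show min i (r'-1) = i from by omega, show min (i-1) (r'-1) = i-1 from by omega, show max r' (i+1) = r' from by omega, show max r' (i-1+1) = r' from by omega]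
    omega
  · rw [show min i' (r-1) = r-1 from by omega, show min (i'-1) (r-1) = r-1 from by omega, show max r (i'+1) = i'+1 from by omega, show max r (i'-1+1) = i' from by omega, show min i (r'-1) = r'-1 from by omega, show min (i-1) (r'-1) = r'-1 from by omega, show max r' (i+1) = i+1 from by omega, show max r' (i-1+1) = r' from by omega]
    omega
  · rw [show min i' (r-1) = r-1 from by omega, show min (i'-1) (r-1) = r-1 from by omega, show max r (i'+1) = i'+1 from by omega, show max r (i'-1+1) = i' from by omega, show min i (r'-1) = r'-1 from by omega, show min (i-1) (r'-1) = r'-1 from by omega, show max r' (i+1) = i+1 from by omega, show max r' (i-1+1) = i from by omega]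
    omega
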